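/- Let f : I → ℝ be strictly increasing and m < n in ℕ. Then for all x ∈ Iᵐ, A_f^{[m]}(x₁,…,x_m) = inf{z ∈ I : A_f^{[n]}(x₁,…,x_m,z,…,z) < z} = sup{z ∈ I : A_f^{[n]}(x₁,…,x_m,z,…,z) > z}, where z appears n−m times. -/

import Mathlib

open Set Filter Topology

/-- `finv` is the generalized inverse of the strictly increasing function `f : I → ℝ`:
an increasing continuous left inverse of `f` mapping `conv (f '' I)` into `I`. -/
def IsGenInv (I : Set ℝ) (f finv : ℝ → ℝ) : Prop :=
  MonotoneOn finv (convexHull ℝ (f '' I)) ∧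
  ContinuousOn finv (convexHull ℝ (f '' I)) ∧
  Set.MapsTo finv (convexHull ℝ (f '' I)) I ∧
  ∀ x ∈ I, finv (f x) = x

/-- The `n`-variable generalized quasiarithmetic mean `A_f^{[n]}` generated by `f`,
where `finv` is the generalized inverse of `f`. -/
noncomputable def qam (finv f : ℝ → ℝ) (n : ℕ) (x : Fin n → ℝ) : ℝ :=
  finv ((∑ i, f (x i)) / n)

/-- for `m < n`, the `m`-variable mean is determined by the `n`-variable one:
`A_f^{[m]}(x) = inf {z ∈ I : A_f^{[n]}(x₁,…,x_m,z,…,z) < z}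
             = sup {z ∈ I : A_f^{[n]}(x₁,…,x_m,z,…,z) > z}`. -/
theorem stmt14 (I : Set ℝ) (hIo : IsOpen I) (hIc : I.OrdConnected) (hne : I.Nonempty)
    (f finv : ℝ → ℝ) (hf : StrictMonoOn f I) (hinv : IsGenInv I f finv)
    (m n : ℕ) (hm : 0 < m) (hmn : m < n) (x : Fin m → ℝ) (hx : ∀ i, x i ∈ I) :
    qam finv f m x =
      sInf {z | z ∈ I ∧
        qam finv f n (fun i => if h : (i : ℕ) < m then x ⟨i.1, h⟩ else z) < z} ∧
    qam finv f m x =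
      sSup {z | z ∈ I ∧
        z < qam finv f n (fun i => if h : (i : ℕ) < m then x ⟨i.1, h⟩ else z)} := by
  obtain ⟨hmono, hcont, hmaps, hli⟩ := hinv
  have hfI : ∀ z ∈ I, f z ∈ convexHull ℝ (f '' I) :=
    fun z hz => subset_convexHull ℝ _ (Set.mem_image_of_mem f hz)
  have hmr : (0:ℝ) < m := by exact_mod_cast hm
  have hnr : (0:ℝ) < n := by exact_mod_cast hm.trans hmn
  have hmnr : (m:ℝ) < n := by exact_mod_cast hmn
  set S : ℝ := ∑ i, f (x i) with hS
  set c : ℝ := S / m with hc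
  have hcH : c ∈ convexHull ℝ (f '' I) := by
    have h := Finset.centerMass_mem_convexHull (Finset.univ : Finset (Fin m))
      (w := fun _ => (1:ℝ)) (fun i _ => zero_le_one)
      (by simp [Finset.card_univ]; positivity)
      (z := fun i => f (x i)) (fun i _ => Set.mem_image_of_mem f (hx i))
    rw [Finset.centerMass] at h
    simpa [Finset.card_univ, div_eq_inv_mul, hc, hS] using h
  set M : ℝ := finv c with hMdef
  have hMI : M ∈ I := hmaps hcH
  set t : ℝ → ℝ := fun z => (S + ((n:ℝ) - m) * f z) / n with ht
  have hqn : ∀ z, qam finv f n (fun i => if h : (i : ℕ) < m then x ⟨i.1, h⟩ else z)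
      = finv (t z) := by
    intro z
    have hsum : (∑ i : Fin n, f (if h : (i : ℕ) < m then x ⟨i.1, h⟩ else z))
        = S + ((n : ℝ) - m) * f z := by
      have h1 : (∑ i : Fin n, f (if h : (i : ℕ) < m then x ⟨i.1, h⟩ else z))
          = ∑ j ∈ Finset.range n, f (if h : j < m then x ⟨j, h⟩ else z) := by
        rw [Fin.sum_univ_eq_sum_range (fun j => f (if h : j < m then x ⟨j, h⟩ else z)) n]
      rw [h1, ← Finset.sum_range_add_sum_Ico _ hmn.le]
      congr 1
      · rw [Finset.sum_range fun j => f (if h : j < m then x ⟨j, h⟩ else z)]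
        apply Finset.sum_congr rfl
        intro i _
        rw [dif_pos i.isLt]
      · rw [Finset.sum_congr rfl (fun j hj => by
          rw [dif_neg (by exact Nat.not_lt.2 (Finset.mem_Ico.1 hj).1)]),
          Finset.sum_const, Nat.card_Ico, nsmul_eq_mul, Nat.cast_sub hmn.le]
    unfold qam
    rw [hsum]
  have htH : ∀ z ∈ I, t z ∈ convexHull ℝ (f '' I) := by
    intro z hz
    have h := (convex_convexHull ℝ (f '' I)) hcH (hfI z hz)
      (by positivity : (0:ℝ) ≤ (m:ℝ)/n)
      (by
        apply div_nonneg _ hnr.le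
        linarith : (0:ℝ) ≤ ((n:ℝ) - m)/n)
      (by field_simp; ring)
    convert h using 1
    simp only [smul_eq_mul, ht, hc]
    field_simp
  -- basic comparisons
  have h1 : ∀ z ∈ I, z < M → f z < c := by
    intro z hz hzM
    by_contra h
    push_neg at h
    have h' := hmono hcH (hfI z hz) h
    rw [hli z hz] at h'
    exact absurd hzM (not_lt.2 h')
  have h2 : ∀ z ∈ I, M < z → c < f z := by
    intro z hz hzM
    by_contra h
    push_neg at h
    have h' := hmono (hfI z hz) hcH h
    rw [hli z hz] at h'
    exact absurd hzM (not_lt.2 h')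
  have hcm : S = c * m := by rw [hc]; field_simp
  have htlt : ∀ z ∈ I, M < z → t z < f z := by
    intro z hz h
    have hcz := h2 z hz h
    rw [ht]
    simp only
    rw [div_lt_iff₀ hnr]
    nlinarith
  have htgt : ∀ z ∈ I, z < M → f z < t z := by
    intro z hz h
    have hcz := h1 z hz h
    rw [ht]
    simp only
    rw [lt_div_iff₀ hnr]
    nlinarith
  have hAle : ∀ z ∈ I, M < z → finv (t z) ≤ z := by
    intro z hz h
    have h' := hmono (htH z hz) (hfI z hz) (htlt z hz h).le
    rwa [hli z hz] at h'
  have hAge : ∀ z ∈ I, z < M → z ≤ finv (t z) := by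
    intro z hz h
    have h' := hmono (hfI z hz) (htH z hz) (htgt z hz h).le
    rwa [hli z hz] at h'
  -- existence of points in the sets arbitrarily close to M
  have hex1 : ∀ ε > (0:ℝ), ∃ z ∈ I, M < z ∧ z < M + ε ∧ finv (t z) < z := by
    intro ε hε
    obtain ⟨δ, hδ, hball⟩ := Metric.isOpen_iff.1 hIo M hMI
    set z0 : ℝ := M + min ε δ / 2 with hz0
    have hmin : 0 < min ε δ := lt_min hε hδ
    have hz0M : M < z0 := by rw [hz0]; linarith
    have hz0ε : z0 < M + ε := by
      have := min_le_left ε δ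
      rw [hz0]; linarith
    have hz0I : z0 ∈ I := by
      apply hball
      rw [Metric.mem_ball, Real.dist_eq]
      have h1 : z0 - M = min ε δ / 2 := by rw [hz0]; ring
      rw [h1, abs_of_pos (by linarith)]
      have := min_le_right ε δ; linarith
    have hsub : Icc M z0 ⊆ I := hIc.out hMI hz0I
    by_contra hcon
    push_neg at hcon
    set F : ℝ → ℝ := fun y => f (max M (min y z0)) with hF
    have hclampmem : ∀ y : ℝ, max M (min y z0) ∈ I := fun y =>
      hsub ⟨le_max_left _ _, max_le hz0M.le (min_le_right _ _)⟩
    have hFmono : Monotone F := by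
      intro a b hab
      exact hf.monotoneOn (hclampmem a) (hclampmem b)
        (max_le_max le_rfl (min_le_min hab le_rfl))
    obtain ⟨w, hw, hwC⟩ : ∃ w ∈ Ioo M z0, ContinuousAt F w := by
      by_contra hcc
      push_neg at hcc
      have hcnt : (Ioo M z0).Countable :=
        Set.Countable.mono (fun y hy => hcc y hy) hFmono.countable_not_continuousAt
      have hle := hcnt.le_aleph0
      rw [Cardinal.mk_Ioo_real hz0M] at hle
      exact absurd hle (not_le.2 Cardinal.aleph0_lt_continuum)
    have hwI : w ∈ I := hsub ⟨hw.1.le, hw.2.le⟩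
    have htw : t w < f w := htlt w hwI hw.1
    have hFw : F w = f w := by
      rw [hF]; simp only
      rw [min_eq_left hw.2.le, max_eq_right hw.1.le]
    rw [Metric.continuousAt_iff] at hwC
    obtain ⟨δ', hδ', hcont'⟩ := hwC (f w - t w) (by linarith)
    set z' : ℝ := max ((M + w)/2) (w - δ'/2) with hz'
    have hz'w : z' < w := by
      apply max_lt
      · linarith [hw.1]
      · linarith
    have hMz' : M < z' := lt_of_lt_of_le (by linarith [hw.1]) (le_max_left _ _)
    have hz'I : z' ∈ I := hsub ⟨hMz'.le, (hz'w.trans hw.2).le⟩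
    have hdist : dist z' w < δ' := by
      rw [Real.dist_eq, abs_of_neg (by linarith)]
      have := le_max_right ((M + w)/2) (w - δ'/2)
      linarith
    have hd := hcont' hdist
    have hFz' : F z' = f z' := by
      rw [hF]; simp only
      rw [min_eq_left (by linarith [hw.2] : z' ≤ z0), max_eq_right hMz'.le]
    have hfz' : t w < f z' := by
      rw [Real.dist_eq, hFz', hFw] at hd
      have := abs_lt.1 hd
      linarith [this.1]
    have h5 : finv (t w) ≤ finv (f z') := hmono (htH w hwI) (hfI z' hz'I) hfz'.le
    rw [hli z' hz'I] at h5
    have h6 : w ≤ finv (t w) := hcon w hwI hw.1 (hw.2.trans hz0ε)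
    linarith
  have hex2 : ∀ ε > (0:ℝ), ∃ z ∈ I, M - ε < z ∧ z < M ∧ z < finv (t z) := by
    intro ε hε
    obtain ⟨δ, hδ, hball⟩ := Metric.isOpen_iff.1 hIo M hMI
    set z0 : ℝ := M - min ε δ / 2 with hz0
    have hmin : 0 < min ε δ := lt_min hε hδ
    have hz0M : z0 < M := by rw [hz0]; linarith
    have hz0ε : M - ε < z0 := by
      have := min_le_left ε δ
      rw [hz0]; linarith
    have hz0I : z0 ∈ I := by
      apply hball
      rw [Metric.mem_ball, Real.dist_eq]
      have h1 : z0 - M = -(min ε δ / 2) := by rw [hz0]; ring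
      rw [h1, abs_neg, abs_of_pos (by linarith)]
      have := min_le_right ε δ; linarith
    have hsub : Icc z0 M ⊆ I := hIc.out hz0I hMI
    by_contra hcon
    push_neg at hcon
    set F : ℝ → ℝ := fun y => f (max z0 (min y M)) with hF
    have hclampmem : ∀ y : ℝ, max z0 (min y M) ∈ I := fun y =>
      hsub ⟨le_max_left _ _, max_le hz0M.le (min_le_right _ _)⟩
    have hFmono : Monotone F := by
      intro a b hab
      exact hf.monotoneOn (hclampmem a) (hclampmem b)
        (max_le_max le_rfl (min_le_min hab le_rfl))
    obtain ⟨w, hw, hwC⟩ : ∃ w ∈ Ioo z0 M, ContinuousAt F w := by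
      by_contra hcc
      push_neg at hcc
      have hcnt : (Ioo z0 M).Countable :=
        Set.Countable.mono (fun y hy => hcc y hy) hFmono.countable_not_continuousAt
      have hle := hcnt.le_aleph0
      rw [Cardinal.mk_Ioo_real hz0M] at hle
      exact absurd hle (not_le.2 Cardinal.aleph0_lt_continuum)
    have hwI : w ∈ I := hsub ⟨hw.1.le, hw.2.le⟩
    have htw : f w < t w := htgt w hwI hw.2
    have hFw : F w = f w := by
      rw [hF]; simp only
      rw [min_eq_left hw.2.le, max_eq_right hw.1.le]
    rw [Metric.continuousAt_iff] at hwC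
    obtain ⟨δ', hδ', hcont'⟩ := hwC (t w - f w) (by linarith)
    set z' : ℝ := min ((w + M)/2) (w + δ'/2) with hz'
    have hz'w : w < z' := by
      apply lt_min
      · linarith [hw.2]
      · linarith
    have hMz' : z' < M := lt_of_le_of_lt (min_le_left _ _) (by linarith [hw.2])
    have hz'I : z' ∈ I := hsub ⟨(hw.1.trans hz'w).le, hMz'.le⟩
    have hdist : dist z' w < δ' := by
      rw [Real.dist_eq, abs_of_pos (by linarith)]
      have := min_le_right ((w + M)/2) (w + δ'/2)
      linarith
    have hd := hcont' hdist
    have hFz' : F z' = f z' := by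
      rw [hF]; simp only
      rw [min_eq_left hMz'.le, max_eq_right (by linarith [hw.1] : z0 ≤ z')]
    have hfz' : f z' < t w := by
      rw [Real.dist_eq, hFz', hFw] at hd
      have := abs_lt.1 hd
      linarith [this.2]
    have h5 : finv (f z') ≤ finv (t w) := hmono (hfI z' hz'I) (htH w hwI) hfz'.le
    rw [hli z' hz'I] at h5
    have h6 : finv (t w) ≤ w := hcon w hwI (hz0ε.trans hw.1) hw.2
    linarith
  have hqm : qam finv f m x = M := rfl
  constructor
  · rw [hqm]
    have hsetL : {z | z ∈ I ∧
        qam finv f n (fun i => if h : (i : ℕ) < m then x ⟨i.1, h⟩ else z) < z}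
        = {z | z ∈ I ∧ finv (t z) < z} := by
      ext z; simp only [Set.mem_setOf_eq, hqn]
    rw [hsetL]
    have hlb : ∀ z ∈ {z | z ∈ I ∧ finv (t z) < z}, M ≤ z := by
      rintro z ⟨hzI, hz⟩
      by_contra hlt
      push_neg at hlt
      exact absurd hz (not_lt.2 (hAge z hzI hlt))
    obtain ⟨z₁, hz₁I, _, _, hz₁⟩ := hex1 1 one_pos
    have hnonempty : {z | z ∈ I ∧ finv (t z) < z}.Nonempty := ⟨z₁, hz₁I, hz₁⟩
    apply le_antisymm
    · exact le_csInf hnonempty hlb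
    · by_contra hgt
      push_neg at hgt
      obtain ⟨z, hzI, hzM, hzlt, hzA⟩ := hex1 (sInf {z | z ∈ I ∧ finv (t z) < z} - M)
        (by linarith)
      have hle : sInf {z | z ∈ I ∧ finv (t z) < z} ≤ z := csInf_le ⟨M, hlb⟩ ⟨hzI, hzA⟩
      linarith
  · rw [hqm]
    have hsetU : {z | z ∈ I ∧
        z < qam finv f n (fun i => if h : (i : ℕ) < m then x ⟨i.1, h⟩ else z)}
        = {z | z ∈ I ∧ z < finv (t z)} := by
      ext z; simp only [Set.mem_setOf_eq, hqn]
    rw [hsetU]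
    have hub : ∀ z ∈ {z | z ∈ I ∧ z < finv (t z)}, z ≤ M := by
      rintro z ⟨hzI, hz⟩
      by_contra hlt
      push_neg at hlt
      exact absurd hz (not_lt.2 (hAle z hzI hlt))
    obtain ⟨z₁, hz₁I, _, _, hz₁⟩ := hex2 1 one_pos
    have hnonempty : {z | z ∈ I ∧ z < finv (t z)}.Nonempty := ⟨z₁, hz₁I, hz₁⟩
    apply le_antisymm
    · by_contra hgt
      push_neg at hgt
      obtain ⟨z, hzI, hzlt, hzM, hzA⟩ := hex2 (M - sSup {z | z ∈ I ∧ z < finv (t z)})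
        (by linarith)
      have hle : z ≤ sSup {z | z ∈ I ∧ z < finv (t z)} := le_csSup ⟨M, hub⟩ ⟨hzI, hzA⟩
      linarith
    · exact csSup_le hnonempty hub
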